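/- Let n ≥ 4 and 2 ≤ a ≤ n−1 be integers. Let P = ℂ⟦u₁,…,uₙ⟧ and let J be the ideal generated by g_j := a·u_j^{a−1} − ∏_{k≠j} u_k for j = 1,…,n. Then for a polynomial p ∈ ℂ[T], the element p(u₁^a) lies in J if and only if T^{a−1} divides p. Equivalently, the kernel of the ℂ-algebra homomorphism ℂ[T] → P/J sending T to the class of u₁^a is the ideal generated by T^{a−1}. -/

import Mathlib

/-- The element `g_j = a·u_j^{a−1} − ∏_{k≠j} u_k` of the formal power series ring
`P = ℂ⟦u₁,…,uₙ⟧`, where `u_j` is `MvPowerSeries.X j`. Up to sign, this is the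
partial derivative `∂Z^n_a/∂u_j` of `Z^n_a = −u₁⋯uₙ + Σ_j u_j^a`. -/
noncomputable def gPow (n a : ℕ) (j : Fin n) : MvPowerSeries (Fin n) ℂ :=
  (a : MvPowerSeries (Fin n) ℂ) * MvPowerSeries.X j ^ (a - 1)
    - ∏ k ∈ Finset.univ.erase j, MvPowerSeries.X k

namespace JacAux

open MvPowerSeries Finset

/-- Reachability: `T n a w` holds iff the exponent vector `w` can be rewritten into the
socle exponent `(a-2,…,a-2)` by repeatedly applying moves `w ↦ w + 1⃗ - a·e_j`. -/
inductive T (n a : ℕ) : (Fin n → ℕ) → Prop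
  | base : T n a (fun _ => a - 2)
  | step (w w' : Fin n → ℕ) (j : Fin n)
      (heq : ∀ k, w k + 1 = w' k + (if k = j then a else 0))
      (h : T n a w') : T n a w

/-- Exchange/abelian property: the reachability set is closed under applicable moves. -/
lemma T.move {n a : ℕ} (ha : 2 ≤ a) {w : Fin n → ℕ} (h : T n a w) :
    ∀ (w' : Fin n → ℕ) (j : Fin n),
      (∀ k, w k + 1 = w' k + (if k = j then a else 0)) → T n a w' := by
  induction h with
  | base =>
      intro w' j heq
      have h1 : a - 2 + 1 = w' j + a := by simpa using heq j
      omega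
  | step w w₁ i heq1 h1 ih =>
      intro w' j heq2
      by_cases hij : i = j
      · subst hij
        have hw : w₁ = w' := funext fun k => by
          have a1 := heq1 k; have a2 := heq2 k
          by_cases hk : k = i
          · rw [if_pos hk] at a1 a2; omega
          · rw [if_neg hk] at a1 a2; omega
        rwa [← hw]
      · have hj : a ≤ w₁ j := by
          have a1 := heq1 j; have a2 := heq2 j
          rw [if_neg (fun hh => hij hh.symm)] at a1
          rw [if_pos rfl] at a2
          omega
        obtain ⟨w₂, h₂⟩ : ∃ w₂ : Fin n → ℕ,
            ∀ k, w₁ k + 1 = w₂ k + (if k = j then a else 0) := by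
          refine ⟨fun k => w₁ k + 1 - (if k = j then a else 0), fun k => ?_⟩
          show w₁ k + 1 = (w₁ k + 1 - if k = j then a else 0) + if k = j then a else 0
          by_cases hk : k = j
          · subst hk; rw [if_pos rfl]; omega
          · rw [if_neg hk]; omega
        have hT2 := ih w₂ j h₂
        refine T.step w' w₂ i (fun k => ?_) hT2
        have a1 := heq1 k; have a2 := heq2 k; have a3 := h₂ k
        by_cases hk1 : k = i <;> by_cases hk2 : k = j
        · exact absurd (hk1 ▸ hk2 : i = j) hij
        · rw [if_pos hk1] at a1 ⊢; rw [if_neg hk2] at a2 a3; omega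
        · rw [if_neg hk1] at a1 ⊢; rw [if_pos hk2] at a2 a3; omega
        · rw [if_neg hk1] at a1 ⊢; rw [if_neg hk2] at a2 a3; omega

lemma sum_heq {n a : ℕ} {w w' : Fin n → ℕ} {j : Fin n}
    (heq : ∀ k, w k + 1 = w' k + (if k = j then a else 0)) :
    (∑ k, w k) + n = (∑ k, w' k) + a := by
  have h1 : ∑ k, (w k + 1) = ∑ k, (w' k + (if k = j then a else 0)) :=
    Finset.sum_congr rfl fun k _ => heq k
  rw [Finset.sum_add_distrib, Finset.sum_add_distrib, Finset.sum_const, Finset.card_univ,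
    Fintype.card_fin, smul_eq_mul, mul_one, Finset.sum_ite_eq' Finset.univ j (fun _ => a),
    if_pos (Finset.mem_univ j)] at h1
  omega

/-- Degree invariant along reachability. -/
lemma T.sum_inv {n a : ℕ} (han : a + 1 ≤ n) {w : Fin n → ℕ} (h : T n a w) :
    ∃ m, (∑ k, w k) + m * (n - a) = n * (a - 2) := by
  induction h with
  | base =>
      exact ⟨0, by simp [Finset.sum_const, Finset.card_univ, mul_comm]⟩
  | step w w' j heq h ih =>
      obtain ⟨m, hm⟩ := ih
      refine ⟨m + 1, ?_⟩
      have hs := sum_heq heq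
      have hexp : (m + 1) * (n - a) = m * (n - a) + (n - a) := by ring
      rw [hexp]
      set t := m * (n - a) with ht
      omega

lemma T.coord_le {n a : ℕ} (han : a + 1 ≤ n) {w : Fin n → ℕ} (h : T n a w) (k : Fin n) :
    w k ≤ n * (a - 2) := by
  obtain ⟨m, hm⟩ := h.sum_inv han
  have h1 : w k ≤ ∑ k', w k' :=
    Finset.single_le_sum (f := w) (fun i _ => Nat.zero_le _) (Finset.mem_univ k)
  omega

open Classical in
/-- The weight function: `a^{-κ(w)}` on the reachability set, `0` elsewhere. -/
noncomputable def lam (n a : ℕ) (w : Fin n → ℕ) : ℂ :=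
  if T n a w then ((a : ℂ))⁻¹ ^ ((n * (a - 2) - ∑ k, w k) / (n - a)) else 0

lemma lam_pos {n a : ℕ} {w : Fin n → ℕ} (h : T n a w) :
    lam n a w = ((a : ℂ))⁻¹ ^ ((n * (a - 2) - ∑ k, w k) / (n - a)) := by
  rw [lam, if_pos h]

lemma lam_neg {n a : ℕ} {w : Fin n → ℕ} (h : ¬ T n a w) : lam n a w = 0 := by
  rw [lam, if_neg h]

/-- The key step identity for the weight function. -/
lemma lam_step {n a : ℕ} (ha : 2 ≤ a) (han : a + 1 ≤ n) {w w' : Fin n → ℕ} {j : Fin n}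
    (heq : ∀ k, w k + 1 = w' k + (if k = j then a else 0)) :
    lam n a w' = (a : ℂ) * lam n a w := by
  by_cases h : T n a w
  · have h' : T n a w' := h.move ha w' j heq
    rw [lam_pos h, lam_pos h']
    obtain ⟨m, hm⟩ := h.sum_inv han
    obtain ⟨m', hm'⟩ := h'.sum_inv han
    have hs := sum_heq heq
    have hd : 0 < n - a := by omega
    have hmm : m = m' + 1 := by
      refine Nat.eq_of_mul_eq_mul_right hd ?_
      have hexp : (m' + 1) * (n - a) = m' * (n - a) + (n - a) := by ring
      rw [hexp]
      set t := m * (n - a) with ht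
      set t' := m' * (n - a) with ht'
      omega
    have k1 : (n * (a - 2) - ∑ k, w k) / (n - a) = m := by
      have h2 : n * (a - 2) - ∑ k, w k = m * (n - a) := by
        set t := m * (n - a) with ht; omega
      rw [h2, Nat.mul_div_cancel _ hd]
    have k2 : (n * (a - 2) - ∑ k, w' k) / (n - a) = m' := by
      have h2 : n * (a - 2) - ∑ k, w' k = m' * (n - a) := by
        set t' := m' * (n - a) with ht'; omega
      rw [h2, Nat.mul_div_cancel _ hd]
    have haC : (a : ℂ) ≠ 0 := Nat.cast_ne_zero.mpr (by omega)
    rw [k1, k2, hmm, pow_succ]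
    field_simp
  · have h' : ¬ T n a w' := fun hw' => h (T.step w w' j heq hw')
    rw [lam_neg h, lam_neg h', mul_zero]

/-- The finite index set of exponents: all `d` with coordinates `≤ n(a-2)`. -/
noncomputable def B (n a : ℕ) : Finset (Fin n →₀ ℕ) :=
  (Finset.univ : Finset (Fin n → Fin (n * (a - 2) + 1))).image
    (fun v => Finsupp.equivFunOnFinite.symm (fun k => (v k : ℕ)))

lemma mem_B {n a : ℕ} {d : Fin n →₀ ℕ} : d ∈ B n a ↔ ∀ k, d k ≤ n * (a - 2) := by
  constructor
  · intro hd k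
    simp only [B, Finset.mem_image] at hd
    obtain ⟨v, -, rfl⟩ := hd
    simpa using Nat.lt_succ_iff.mp (v k).isLt
  · intro hd
    simp only [B, Finset.mem_image]
    refine ⟨fun k => ⟨d k, Nat.lt_succ_of_le (hd k)⟩, Finset.mem_univ _, ?_⟩
    ext k
    simp

/-- The socle functional. -/
noncomputable def L (n a : ℕ) (f : MvPowerSeries (Fin n) ℂ) : ℂ :=
  ∑ d ∈ B n a, lam n a d * MvPowerSeries.coeff d f

lemma L_add {n a : ℕ} (f g : MvPowerSeries (Fin n) ℂ) :
    L n a (f + g) = L n a f + L n a g := by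
  simp [L, mul_add, Finset.sum_add_distrib]

lemma L_sum {n a : ℕ} {ι : Type*} (s : Finset ι) (f : ι → MvPowerSeries (Fin n) ℂ) :
    L n a (∑ i ∈ s, f i) = ∑ i ∈ s, L n a (f i) := by
  simp only [L, map_sum, Finset.mul_sum]
  rw [Finset.sum_comm]

lemma L_smul {n a : ℕ} (c : ℂ) (f : MvPowerSeries (Fin n) ℂ) :
    L n a (c • f) = c * L n a f := by
  simp only [L, map_smul, smul_eq_mul, Finset.mul_sum]
  apply Finset.sum_congr rfl
  intros; ring

section Monomials

open MvPowerSeries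

variable {n a : ℕ}

lemma prod_X_eq (s : Finset (Fin n)) :
    (∏ k ∈ s, (MvPowerSeries.X k : MvPowerSeries (Fin n) ℂ))
      = MvPowerSeries.monomial (∑ k ∈ s, Finsupp.single k 1) 1 := by
  classical
  induction s using Finset.induction_on with
  | empty => simp [MvPowerSeries.monomial_zero_one]
  | insert _ _ h ih =>
      rename_i b s'
      rw [Finset.prod_insert h, ih, Finset.sum_insert h, MvPowerSeries.X_def,
        MvPowerSeries.monomial_mul_monomial, one_mul]

/-- The exponent of the monomial `∏_{k ≠ j} u_k`. -/
noncomputable def nu (n : ℕ) (j : Fin n) : Fin n →₀ ℕ :=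
  ∑ k ∈ Finset.univ.erase j, Finsupp.single k 1

lemma nu_apply (j k : Fin n) : nu n j k = if k = j then 0 else 1 := by
  classical
  rw [nu, Finsupp.finset_sum_apply]
  simp only [Finsupp.single_apply]
  rw [Finset.sum_ite_eq' (Finset.univ.erase j) k (fun _ => 1)]
  by_cases hk : k = j
  · simp [hk]
  · simp [hk, Finset.mem_erase]

lemma gPow_eq (j : Fin n) :
    gPow n a j = (a : MvPowerSeries (Fin n) ℂ)
        * MvPowerSeries.monomial (Finsupp.single j (a - 1)) 1
      - MvPowerSeries.monomial (nu n j) 1 := by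
  rw [gPow, MvPowerSeries.X_pow_eq, prod_X_eq]
  rfl

lemma sub_add_apply (d e f : Fin n →₀ ℕ) (k : Fin n) :
    (d - e + f) k = d k - e k + f k := by
  simp [Finsupp.tsub_apply]

lemma L_sub (f g : MvPowerSeries (Fin n) ℂ) :
    L n a (f - g) = L n a f - L n a g := by
  simp [L, mul_sub, Finset.sum_sub_distrib]

/-- The crucial lemma: the functional `L` annihilates every multiple of `gPow n a j`. -/
lemma L_mul_g (ha : 2 ≤ a) (han : a + 1 ≤ n) (h : MvPowerSeries (Fin n) ℂ) (j : Fin n) :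
    L n a (h * gPow n a j) = 0 := by
  classical
  set μ : Fin n →₀ ℕ := Finsupp.single j (a - 1) with hμ
  have hμapp : ∀ k, μ k = if k = j then a - 1 else 0 := by
    intro k
    rw [hμ, Finsupp.single_apply]
    by_cases hk : k = j
    · simp [hk]
    · rw [if_neg (fun hh => hk hh.symm), if_neg hk]
  have hrw : h * gPow n a j
      = (a : ℂ) • (h * MvPowerSeries.monomial μ 1)
        - h * MvPowerSeries.monomial (nu n j) 1 := by
    rw [gPow_eq, MvPowerSeries.smul_eq_C_mul]
    have hC : (MvPowerSeries.C (σ := Fin n) (R := ℂ)) ((a : ℕ) : ℂ)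
        = ((a : ℕ) : MvPowerSeries (Fin n) ℂ) := map_natCast _ a
    rw [hC]
    ring
  rw [hrw, L_sub, L_smul, sub_eq_zero]
  -- reduce both sides to sums over filtered sets
  have key : ∀ (e : Fin n →₀ ℕ),
      L n a (h * MvPowerSeries.monomial e 1)
        = ∑ d ∈ (B n a).filter (fun d : Fin n →₀ ℕ => T n a ⇑d ∧ e ≤ d),
            lam n a ⇑d * MvPowerSeries.coeff (d - e) h := by
    intro e
    rw [L]
    rw [← Finset.sum_filter_of_ne (p := fun d : Fin n →₀ ℕ => T n a ⇑d ∧ e ≤ d)]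
    · refine Finset.sum_congr rfl fun d hd => ?_
      rw [Finset.mem_filter] at hd
      rw [MvPowerSeries.coeff_mul_monomial, if_pos hd.2.2, mul_one]
    · intro d _ hne
      constructor
      · by_contra hT
        exact hne (by rw [lam_neg hT, zero_mul])
      · by_contra hle
        exact hne (by rw [MvPowerSeries.coeff_mul_monomial, if_neg hle, mul_zero])
  rw [key, key, Finset.mul_sum]
  refine Finset.sum_nbij' (fun d => d - μ + nu n j) (fun d => d - nu n j + μ) ?_ ?_ ?_ ?_ ?_
  · -- maps into S2
    intro d hd
    rw [Finset.mem_filter] at hd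
    obtain ⟨hdB, hdT, hdle⟩ := hd
    have hdj : a - 1 ≤ d j := by have := hdle j; rwa [hμapp j, if_pos rfl] at this
    have happ : ∀ k, (d - μ + nu n j) k = if k = j then d j - (a - 1) else d k + 1 := by
      intro k
      rw [sub_add_apply, hμapp, nu_apply]
      by_cases hk : k = j <;> simp [hk]
    have hheq : ∀ k, d k + 1 = (d - μ + nu n j) k + (if k = j then a else 0) := by
      intro k
      rw [happ k]
      by_cases hk : k = j
      · subst hk; rw [if_pos rfl, if_pos rfl]; omega
      · rw [if_neg hk, if_neg hk]
    have hT' : T n a ⇑(d - μ + nu n j) := hdT.move ha _ j hheq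
    simp only [Finset.mem_filter]
    refine ⟨mem_B.mpr fun k => hT'.coord_le han k, hT', ?_⟩
    rw [Finsupp.le_def]
    intro k
    rw [nu_apply, happ]
    by_cases hk : k = j <;> simp [hk]
  · -- maps back into S1
    intro d hd
    rw [Finset.mem_filter] at hd
    obtain ⟨hdB, hdT, hdle⟩ := hd
    have hdge : ∀ k, k ≠ j → 1 ≤ d k := by
      intro k hk
      have := hdle k; rwa [nu_apply, if_neg hk] at this
    have happ : ∀ k, (d - nu n j + μ) k = if k = j then d j + (a - 1) else d k - 1 := by
      intro k
      rw [sub_add_apply, hμapp, nu_apply]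
      by_cases hk : k = j <;> simp [hk]
    have hheq : ∀ k, (d - nu n j + μ) k + 1 = d k + (if k = j then a else 0) := by
      intro k
      rw [happ k]
      by_cases hk : k = j
      · subst hk; rw [if_pos rfl, if_pos rfl]; omega
      · rw [if_neg hk, if_neg hk]
        have := hdge k hk; omega
    have hT' : T n a ⇑(d - nu n j + μ) := T.step _ _ j hheq hdT
    simp only [Finset.mem_filter]
    refine ⟨mem_B.mpr fun k => hT'.coord_le han k, hT', ?_⟩
    rw [Finsupp.le_def]
    intro k
    rw [hμapp, happ]
    by_cases hk : k = j <;> simp [hk]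
  · -- left inverse
    intro d hd
    rw [Finset.mem_filter] at hd
    obtain ⟨hdB, hdT, hdle⟩ := hd
    have hdj : a - 1 ≤ d j := by have := hdle j; rwa [hμapp j, if_pos rfl] at this
    show d - μ + nu n j - nu n j + μ = d
    ext k
    rw [sub_add_apply, sub_add_apply, hμapp, nu_apply]
    by_cases hk : k = j <;> simp [hk] <;> omega
  · -- right inverse
    intro d hd
    rw [Finset.mem_filter] at hd
    obtain ⟨hdB, hdT, hdle⟩ := hd
    have hdge : ∀ k, k ≠ j → 1 ≤ d k := by
      intro k hk
      have := hdle k; rwa [nu_apply, if_neg hk] at this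
    show d - nu n j + μ - μ + nu n j = d
    ext k
    rw [sub_add_apply, sub_add_apply, hμapp, nu_apply]
    by_cases hk : k = j
    · simp only [if_pos hk]; omega
    · have := hdge k hk; simp only [if_neg hk]; omega
  · -- values agree
    intro d hd
    rw [Finset.mem_filter] at hd
    obtain ⟨hdB, hdT, hdle⟩ := hd
    have hdj : a - 1 ≤ d j := by have := hdle j; rwa [hμapp j, if_pos rfl] at this
    have happ : ∀ k, (d - μ + nu n j) k = if k = j then d j - (a - 1) else d k + 1 := by
      intro k
      rw [sub_add_apply, hμapp, nu_apply]
      by_cases hk : k = j <;> simp [hk]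
    have hheq : ∀ k, d k + 1 = (d - μ + nu n j) k + (if k = j then a else 0) := by
      intro k
      rw [happ k]
      by_cases hk : k = j
      · subst hk; rw [if_pos rfl, if_pos rfl]; omega
      · rw [if_neg hk, if_neg hk]
    have hlam : lam n a ⇑(d - μ + nu n j) = (a : ℂ) * lam n a ⇑d := lam_step ha han hheq
    have hsub : d - μ + nu n j - nu n j = d - μ := by
      ext k
      rw [Finsupp.tsub_apply, sub_add_apply, Finsupp.tsub_apply]
      omega
    show (a : ℂ) * (lam n a ⇑d * (MvPowerSeries.coeff) (d - μ) h)
        = lam n a ⇑(d - μ + nu n j) * (MvPowerSeries.coeff) (d - μ + nu n j - nu n j) h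
    rw [hsub, hlam]
    ring

end Monomials


section IdealFacts

open MvPowerSeries

variable {n a : ℕ}

lemma g_mem (j : Fin n) : gPow n a j ∈ Ideal.span (Set.range (gPow n a)) :=
  Ideal.subset_span ⟨j, rfl⟩

lemma L_of_mem (ha : 2 ≤ a) (han : a + 1 ≤ n) {z : MvPowerSeries (Fin n) ℂ}
    (hz : z ∈ Ideal.span (Set.range (gPow n a))) : L n a z = 0 := by
  obtain ⟨c, hc⟩ := Ideal.mem_span_range_iff_exists_fun.mp hz
  rw [← hc, L_sum]
  exact Finset.sum_eq_zero fun j _ => L_mul_g ha han (c j) j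

lemma L_congr (ha : 2 ≤ a) (han : a + 1 ≤ n) {u v : MvPowerSeries (Fin n) ℂ}
    (huv : u - v ∈ Ideal.span (Set.range (gPow n a))) : L n a u = L n a v := by
  have h1 : L n a (u - v) = 0 := L_of_mem ha han huv
  rw [L_sub] at h1
  exact sub_eq_zero.mp h1

/-- The constant exponent vector. -/
noncomputable def cF (n e : ℕ) : Fin n →₀ ℕ :=
  Finsupp.equivFunOnFinite.symm (fun _ => e)

lemma cF_apply (e : ℕ) (k : Fin n) : cF n e k = e := by
  simp [cF]

lemma Pi_pow_monomial (e : ℕ) :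
    ((∏ k, MvPowerSeries.X k : MvPowerSeries (Fin n) ℂ)) ^ e
      = MvPowerSeries.monomial (cF n e) 1 := by
  classical
  induction e with
  | zero =>
      have h0 : cF n 0 = 0 := by ext k; simp [cF_apply]
      rw [pow_zero, h0, MvPowerSeries.monomial_zero_one]
  | succ e ih =>
      rw [pow_succ, ih, prod_X_eq, MvPowerSeries.monomial_mul_monomial, one_mul]
      have hexp : cF n e + (∑ k' : Fin n, Finsupp.single k' 1) = cF n (e + 1) := by
        ext k
        rw [Finsupp.add_apply, cF_apply, cF_apply]
        have h1 : (∑ k' : Fin n, Finsupp.single k' 1) k = 1 := by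
          rw [Finsupp.finset_sum_apply]
          simp only [Finsupp.single_apply]
          rw [Finset.sum_ite_eq' Finset.univ k (fun _ => 1), if_pos (Finset.mem_univ k)]
        rw [h1]
      rw [hexp]

lemma T_cases {w : Fin n → ℕ} (h : T n a w) :
    w = (fun _ => a - 2) ∨ ∃ j, a ≤ w j + 1 := by
  cases h with
  | base => exact Or.inl rfl
  | step w w' j heq h' =>
      right
      refine ⟨j, ?_⟩
      have h1 := heq j
      rw [if_pos rfl] at h1
      omega

lemma not_T_const (ha : 2 ≤ a) (han : a + 1 ≤ n) (hn : 0 < n) {e : ℕ} (hne : e ≠ a - 2) :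
    ¬ T n a (fun _ => e) := by
  intro hT
  obtain ⟨m, hm⟩ := hT.sum_inv han
  have hsum : (∑ _k : Fin n, e) = n * e := by
    rw [Finset.sum_const, Finset.card_univ, Fintype.card_fin, smul_eq_mul]
  rw [hsum] at hm
  have hle : n * e ≤ n * (a - 2) := le_of_add_le_left hm.le
  have he2 : e ≤ a - 2 := Nat.le_of_mul_le_mul_left hle hn
  rcases T_cases hT with h1 | ⟨j, hj⟩
  · exact hne (congrFun h1 ⟨0, hn⟩)
  · omega

lemma L_monomial_one (c : Fin n →₀ ℕ) :
    L n a (MvPowerSeries.monomial c 1)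
      = if c ∈ B n a then lam n a ⇑c else 0 := by
  classical
  rw [L]
  simp only [MvPowerSeries.coeff_monomial, mul_ite, mul_one, mul_zero]
  rw [Finset.sum_ite_eq' (B n a) c (fun d => lam n a ⇑d)]

lemma L_Pi_pow (ha : 2 ≤ a) (han : a + 1 ≤ n) (hn : 0 < n) (e : ℕ) :
    L n a ((∏ k, MvPowerSeries.X k : MvPowerSeries (Fin n) ℂ) ^ e)
      = if e = a - 2 then 1 else 0 := by
  classical
  rw [Pi_pow_monomial, L_monomial_one]
  have hcoe : ⇑(cF n e) = fun _ => e := funext fun k => cF_apply e k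
  by_cases he : e = a - 2
  · subst he
    have hB : cF n (a - 2) ∈ B n a := mem_B.mpr fun k => by
      rw [cF_apply]
      exact Nat.le_mul_of_pos_left _ hn
    have hT : T n a ⇑(cF n (a - 2)) := by rw [hcoe]; exact T.base
    rw [if_pos hB, if_pos rfl, lam_pos hT]
    have hsum : (∑ k, (cF n (a - 2)) k) = n * (a - 2) := by
      simp only [cF_apply]
      rw [Finset.sum_const, Finset.card_univ, Fintype.card_fin, smul_eq_mul]
    rw [hsum, Nat.sub_self, Nat.zero_div, pow_zero]
  · rw [if_neg he]
    by_cases hB : cF n e ∈ B n a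
    · rw [if_pos hB, lam_neg]
      rw [hcoe]
      exact not_T_const ha han hn he
    · rw [if_neg hB]

end IdealFacts


section Quot

open MvPowerSeries

variable {n a : ℕ}

lemma X_mul_g (ha : 2 ≤ a) (j : Fin n) :
    MvPowerSeries.X j * gPow n a j
      = (a : MvPowerSeries (Fin n) ℂ) * MvPowerSeries.X j ^ a - ∏ k, MvPowerSeries.X k := by
  have h1 : (MvPowerSeries.X j : MvPowerSeries (Fin n) ℂ) ^ a
      = MvPowerSeries.X j * MvPowerSeries.X j ^ (a - 1) := by
    rw [← pow_succ']
    congr 1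
    omega
  have h2 : MvPowerSeries.X j * ∏ k ∈ Finset.univ.erase j, (MvPowerSeries.X k : MvPowerSeries (Fin n) ℂ)
      = ∏ k, MvPowerSeries.X k := Finset.mul_prod_erase Finset.univ _ (Finset.mem_univ j)
  rw [gPow, h1, ← h2]
  ring

lemma aX_sub_Pi_mem (ha : 2 ≤ a) (j : Fin n) :
    (a : MvPowerSeries (Fin n) ℂ) * MvPowerSeries.X j ^ a - ∏ k, MvPowerSeries.X k
      ∈ Ideal.span (Set.range (gPow n a)) := by
  rw [← X_mul_g ha j]
  exact Ideal.mul_mem_left _ _ (g_mem j)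

lemma pow_sub_mem (ha : 2 ≤ a) (j : Fin n) (i : ℕ) :
    (a : MvPowerSeries (Fin n) ℂ) ^ i * (MvPowerSeries.X j ^ a) ^ i
        - (∏ k, MvPowerSeries.X k) ^ i
      ∈ Ideal.span (Set.range (gPow n a)) := by
  obtain ⟨c, hc⟩ := sub_dvd_pow_sub_pow
    ((a : MvPowerSeries (Fin n) ℂ) * MvPowerSeries.X j ^ a) (∏ k, MvPowerSeries.X k) i
  rw [← mul_pow, hc]
  exact Ideal.mul_mem_right _ _ (aX_sub_Pi_mem ha j)

lemma prod_nu_eq :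
    (∏ j, ∏ k ∈ Finset.univ.erase j, (MvPowerSeries.X k : MvPowerSeries (Fin n) ℂ))
      = (∏ k, MvPowerSeries.X k) ^ (n - 1) := by
  classical
  rw [Finset.prod_comm' (s := (Finset.univ : Finset (Fin n)))
    (t := fun j => Finset.univ.erase j) (t' := Finset.univ)
    (s' := fun k => Finset.univ.erase k)
    (fun j k => by simp only [Finset.mem_erase, Finset.mem_univ, and_true, true_and]; exact ne_comm)]
  have h2 : ∀ k : Fin n,
      (∏ _j ∈ Finset.univ.erase k, (MvPowerSeries.X k : MvPowerSeries (Fin n) ℂ))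
        = MvPowerSeries.X k ^ (n - 1) := by
    intro k
    rw [Finset.prod_const, Finset.card_erase_of_mem (Finset.mem_univ k), Finset.card_univ,
      Fintype.card_fin]
  rw [Finset.prod_congr rfl (fun k _ => h2 k), Finset.prod_pow]

lemma Pi_pow_a1_mem (ha : 2 ≤ a) (han : a + 1 ≤ n) (hn : 0 < n) :
    (∏ k, MvPowerSeries.X k : MvPowerSeries (Fin n) ℂ) ^ (a - 1)
      ∈ Ideal.span (Set.range (gPow n a)) := by
  classical
  set J := Ideal.span (Set.range (gPow n a)) with hJ
  set Q := Ideal.Quotient.mk J with hQ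
  set Pi := (∏ k, MvPowerSeries.X k : MvPowerSeries (Fin n) ℂ) with hPi
  have hg : ∀ j : Fin n,
      Q ((a : MvPowerSeries (Fin n) ℂ) * MvPowerSeries.X j ^ (a - 1))
        = Q (∏ k ∈ Finset.univ.erase j, MvPowerSeries.X k) := by
    intro j
    rw [← sub_eq_zero, ← map_sub, Ideal.Quotient.eq_zero_iff_mem]
    exact g_mem j
  have hlhs : (∏ j : Fin n, ((a : MvPowerSeries (Fin n) ℂ) * MvPowerSeries.X j ^ (a - 1)))
      = (a : MvPowerSeries (Fin n) ℂ) ^ n * Pi ^ (a - 1) := by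
    rw [Finset.prod_mul_distrib, Finset.prod_const, Finset.card_univ, Fintype.card_fin,
      Finset.prod_pow]
  have hprod : Q ((a : MvPowerSeries (Fin n) ℂ) ^ n * Pi ^ (a - 1)) = Q (Pi ^ (n - 1)) := by
    rw [← hlhs, map_prod]
    rw [Finset.prod_congr rfl (fun j _ => hg j), ← map_prod, prod_nu_eq]
  have hfac : Q (Pi ^ (a - 1)) * Q ((a : MvPowerSeries (Fin n) ℂ) ^ n - Pi ^ (n - a)) = 0 := by
    rw [← map_mul]
    have hexp : Pi ^ (a - 1) * ((a : MvPowerSeries (Fin n) ℂ) ^ n - Pi ^ (n - a))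
        = (a : MvPowerSeries (Fin n) ℂ) ^ n * Pi ^ (a - 1) - Pi ^ (n - 1) := by
      rw [mul_sub]
      congr 1
      · ring
      · rw [← pow_add]
        congr 1
        omega
    rw [hexp, map_sub, hprod, sub_self]
  have haC : (a : ℂ) ≠ 0 := Nat.cast_ne_zero.mpr (by omega)
  have hu0 : IsUnit ((a : MvPowerSeries (Fin n) ℂ) ^ n - Pi ^ (n - a)) := by
    rw [MvPowerSeries.isUnit_iff_constantCoeff]
    have hc1 : MvPowerSeries.constantCoeff (σ := Fin n) (R := ℂ) Pi = 0 := by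
      rw [hPi, map_prod]
      exact Finset.prod_eq_zero (Finset.mem_univ ⟨0, hn⟩) (MvPowerSeries.constantCoeff_X _)
    rw [map_sub, map_pow, map_pow, hc1, zero_pow (by omega : n - a ≠ 0), map_natCast, sub_zero]
    exact isUnit_iff_ne_zero.mpr (pow_ne_zero _ haC)
  have hu : IsUnit (Q ((a : MvPowerSeries (Fin n) ℂ) ^ n - Pi ^ (n - a))) := hu0.map Q
  have hz : Q (Pi ^ (a - 1)) = 0 := (hu.mul_left_eq_zero).mp hfac
  rwa [Ideal.Quotient.eq_zero_iff_mem] at hz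

lemma x_pow_mem (ha : 2 ≤ a) (han : a + 1 ≤ n) (hn : 0 < n) (j0 : Fin n) :
    ((MvPowerSeries.X j0 : MvPowerSeries (Fin n) ℂ) ^ a) ^ (a - 1)
      ∈ Ideal.span (Set.range (gPow n a)) := by
  have haC : (a : ℂ) ≠ 0 := Nat.cast_ne_zero.mpr (by omega)
  have h1 : (a : MvPowerSeries (Fin n) ℂ) ^ (a - 1)
      * ((MvPowerSeries.X j0 : MvPowerSeries (Fin n) ℂ) ^ a) ^ (a - 1)
      ∈ Ideal.span (Set.range (gPow n a)) := by
    have h2 := pow_sub_mem ha j0 (a - 1)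
    have h3 := Pi_pow_a1_mem ha han hn
    have h4 := Ideal.add_mem _ h2 h3
    simpa using h4
  have hC : (MvPowerSeries.C (σ := Fin n) (R := ℂ)) ((a : ℂ)⁻¹ ^ (a - 1))
      * (a : MvPowerSeries (Fin n) ℂ) ^ (a - 1) = 1 := by
    have hcast : ((a : ℕ) : MvPowerSeries (Fin n) ℂ)
        = (MvPowerSeries.C (σ := Fin n) (R := ℂ)) ((a : ℕ) : ℂ) := (map_natCast _ a).symm
    rw [hcast, ← map_pow, ← map_mul, ← mul_pow, inv_mul_cancel₀ haC, one_pow, map_one]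
  have heq : ((MvPowerSeries.X j0 : MvPowerSeries (Fin n) ℂ) ^ a) ^ (a - 1)
      = (MvPowerSeries.C (σ := Fin n) (R := ℂ)) ((a : ℂ)⁻¹ ^ (a - 1))
        * ((a : MvPowerSeries (Fin n) ℂ) ^ (a - 1)
          * ((MvPowerSeries.X j0 : MvPowerSeries (Fin n) ℂ) ^ a) ^ (a - 1)) := by
    rw [← mul_assoc, hC, one_mul]
  rw [heq]
  exact Ideal.mul_mem_left _ _ h1

end Quot


end JacAux

open JacAux

/-- For `n ≥ 4` and `2 ≤ a ≤ n−1`, in `P = ℂ⟦u₁,…,uₙ⟧` with `J` the ideal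
generated by `g₁,…,gₙ`: for a polynomial `p ∈ ℂ[T]`, the element `p(u₁^a)` lies in `J`
iff `T^{a−1}` divides `p`.  (Equivalently, the kernel of `ℂ[T] → P/J`, `T ↦ [u₁^a]`, is
the ideal `(T^{a−1})`.) -/
theorem kernel_of_polynomial_map_to_power_series_jacobian_ring
    (n a : ℕ) (hn : 4 ≤ n) (ha : 2 ≤ a) (han : a ≤ n - 1) (p : Polynomial ℂ) :
    Polynomial.aeval
        ((MvPowerSeries.X (⟨0, by omega⟩ : Fin n) : MvPowerSeries (Fin n) ℂ) ^ a) p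
        ∈ Ideal.span (Set.range (gPow n a))
      ↔ Polynomial.X ^ (a - 1) ∣ p := by
  classical
  have han' : a + 1 ≤ n := by omega
  have hn0 : 0 < n := by omega
  set j0 : Fin n := ⟨0, by omega⟩ with hj0
  set J := Ideal.span (Set.range (gPow n a)) with hJ
  set x : MvPowerSeries (Fin n) ℂ := MvPowerSeries.X j0 ^ a with hx
  constructor
  · intro hmem
    rw [Polynomial.X_pow_dvd_iff]
    intro i hi
    have hia : i ≤ a - 2 := by omega
    set M := p.natDegree + a with hM
    have hdeg : p.natDegree < M := by omega
    have hav : Polynomial.aeval x p = ∑ m ∈ Finset.range M, p.coeff m • x ^ m :=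
      Polynomial.aeval_eq_sum_range' hdeg x
    have htail : ∑ m ∈ Finset.Ico (a - 1) M, p.coeff m • x ^ m ∈ J := by
      refine Ideal.sum_mem _ fun m hm => ?_
      rw [Finset.mem_Ico] at hm
      have hxm : x ^ m = x ^ (a - 1) * x ^ (m - (a - 1)) := by
        rw [← pow_add]; congr 1; omega
      rw [hxm]
      have hx1 : x ^ (a - 1) ∈ J := x_pow_mem ha han' hn0 j0
      rw [MvPowerSeries.smul_eq_C_mul]
      exact Ideal.mul_mem_left _ _ (Ideal.mul_mem_right _ _ hx1)
    have hsplit : (∑ m ∈ Finset.range (a - 1), p.coeff m • x ^ m)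
        + ∑ m ∈ Finset.Ico (a - 1) M, p.coeff m • x ^ m
        = ∑ m ∈ Finset.range M, p.coeff m • x ^ m := by
      rw [Finset.range_eq_Ico]
      rw [Finset.range_eq_Ico]
      exact Finset.sum_Ico_consecutive (fun m => p.coeff m • x ^ m) (Nat.zero_le (a - 1)) (by omega : a - 1 ≤ M)
    have hhead : ∑ m ∈ Finset.range (a - 1), p.coeff m • x ^ m ∈ J := by
      have h5 : Polynomial.aeval x p ∈ J := hmem
      rw [hav] at h5
      have h6 := Ideal.sub_mem _ h5 htail
      rwa [← hsplit, add_sub_cancel_right] at h6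
    set Pi := (∏ k, MvPowerSeries.X k : MvPowerSeries (Fin n) ℂ) with hPi
    set z := (a : MvPowerSeries (Fin n) ℂ) ^ (a - 2)
        * (Pi ^ (a - 2 - i) * ∑ m ∈ Finset.range (a - 1), p.coeff m • x ^ m) with hz
    have hzJ : z ∈ J := Ideal.mul_mem_left _ _ (Ideal.mul_mem_left _ _ hhead)
    have hzsum : z = ∑ m ∈ Finset.range (a - 1),
        p.coeff m • ((a : MvPowerSeries (Fin n) ℂ) ^ (a - 2) * (Pi ^ (a - 2 - i) * x ^ m)) := by
      rw [hz, Finset.mul_sum, Finset.mul_sum]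
      exact Finset.sum_congr rfl fun m _ => by rw [mul_smul_comm, mul_smul_comm]
    have hterm : ∀ m ∈ Finset.range (a - 1),
        L n a (p.coeff m • ((a : MvPowerSeries (Fin n) ℂ) ^ (a - 2) * (Pi ^ (a - 2 - i) * x ^ m)))
          = if m = i then p.coeff m * (a : ℂ) ^ (a - 2 - m) else 0 := by
      intro m hm
      rw [Finset.mem_range] at hm
      rw [L_smul]
      have hcong : (a : MvPowerSeries (Fin n) ℂ) ^ (a - 2) * (Pi ^ (a - 2 - i) * x ^ m)
          - (a : MvPowerSeries (Fin n) ℂ) ^ (a - 2 - m) * (Pi ^ (a - 2 - i) * Pi ^ m) ∈ J := by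
        have hsplit2 : (a : MvPowerSeries (Fin n) ℂ) ^ (a - 2)
            = (a : MvPowerSeries (Fin n) ℂ) ^ (a - 2 - m) * (a : MvPowerSeries (Fin n) ℂ) ^ m := by
          rw [← pow_add]; congr 1; omega
        have hfac : (a : MvPowerSeries (Fin n) ℂ) ^ (a - 2) * (Pi ^ (a - 2 - i) * x ^ m)
            - (a : MvPowerSeries (Fin n) ℂ) ^ (a - 2 - m) * (Pi ^ (a - 2 - i) * Pi ^ m)
            = ((a : MvPowerSeries (Fin n) ℂ) ^ (a - 2 - m) * Pi ^ (a - 2 - i))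
              * ((a : MvPowerSeries (Fin n) ℂ) ^ m * x ^ m - Pi ^ m) := by
          rw [hsplit2]; ring
        rw [hfac]
        exact Ideal.mul_mem_left _ _ (pow_sub_mem ha j0 m)
      rw [L_congr ha han' hcong]
      have hsm : (a : MvPowerSeries (Fin n) ℂ) ^ (a - 2 - m) * (Pi ^ (a - 2 - i) * Pi ^ m)
          = ((a : ℂ) ^ (a - 2 - m)) • (Pi ^ (a - 2 - i + m)) := by
        rw [MvPowerSeries.smul_eq_C_mul, map_pow, map_natCast, pow_add]
      rw [hsm, L_smul, L_Pi_pow ha han' hn0]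
      by_cases hmi : m = i
      · subst hmi
        rw [if_pos (by omega : a - 2 - m + m = a - 2), if_pos rfl, mul_one]
      · rw [if_neg (by omega : ¬ (a - 2 - i + m = a - 2)), if_neg hmi]
        simp
    have hLz : L n a z = p.coeff i * (a : ℂ) ^ (a - 2 - i) := by
      rw [hzsum, L_sum, Finset.sum_congr rfl hterm,
        Finset.sum_ite_eq' (Finset.range (a - 1)) i (fun m => p.coeff m * (a : ℂ) ^ (a - 2 - m)),
        if_pos (Finset.mem_range.mpr (by omega))]
    have hL0 : L n a z = 0 := L_of_mem ha han' hzJ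
    have haC : (a : ℂ) ≠ 0 := Nat.cast_ne_zero.mpr (by omega)
    have := hLz.symm.trans hL0
    exact (mul_eq_zero.mp this).resolve_right (pow_ne_zero _ haC)
  · rintro ⟨q, rfl⟩
    rw [map_mul, map_pow, Polynomial.aeval_X]
    exact Ideal.mul_mem_right _ _ (x_pow_mem ha han' hn0 j0)
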